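/- (Conservation law of the −1 flow in SU(N).) Let N ≥ 2. Let v, h⊥ : ℝ → ℂ^{N−1} be differentiable row-vector-valued functions and let 𝐡 : ℝ → M_{N−1}(ℂ) be a differentiable matrix-valued function with 𝐡(x)† = −𝐡(x) for all x. Set h := −i·tr 𝐡 (a real-valued function). Suppose that for all x: (i) h⊥′ + i·h·v + v⌟𝐡 = 0, and (ii) 𝐡′ = v̄⊗h⊥ − h̄⊥⊗v. Then the function x ↦ |h⊥(x)|² + (1/2)·(h(x)² − tr(𝐡(x)²)) is constant on ℝ. (This is the conservation law 0 = D_x(|h⊥|² + (1/2)(h² + |𝐡|²)) corresponding to the chiral wave map conservation law 0 = ∇_x|γ_t|²_g for the −1 flow, used to normalize |γ_t|_g and derive the complex vector sine-Gordon equation.) -/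

import Mathlib

open Matrix

noncomputable section

/-- Componentwise complex conjugate of a row vector. -/
def cvec {n : ℕ} (p : Fin n → ℂ) : Fin n → ℂ := fun j => starRingEnd ℂ (p j)

/-- Dot product p·q = Σ_j p_j q_j. -/
def dotv {n : ℕ} (p q : Fin n → ℂ) : ℂ := ∑ j, p j * q j

/-- Contraction (p⌟M)_k = Σ_j p_j M_{jk}. -/
def contr {n : ℕ} (p : Fin n → ℂ) (M : Matrix (Fin n) (Fin n) ℂ) : Fin n → ℂ :=
  fun k => ∑ j, p j * M j k

lemma sum_swap_mul' {n : ℕ} (f : Fin n → Fin n → ℂ) :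
    ∑ j, ∑ k, f j k = ∑ j, ∑ k, f k j := Finset.sum_comm

lemma aux_zero {n : ℕ} (vv p : Fin n → ℂ) (M : Matrix (Fin n) (Fin n) ℂ)
    (hc : ∀ j k, starRingEnd ℂ (M k j) = - M j k) :
    (∑ j, ((-(Complex.I * (-Complex.I * ∑ i, M i i) * vv j + ∑ m, vv m * M m j)) * starRingEnd ℂ (p j)
      + p j * star (-(Complex.I * (-Complex.I * ∑ i, M i i) * vv j + ∑ m, vv m * M m j))))
    + (1/2) * (((-Complex.I * ∑ j, (starRingEnd ℂ (vv j) * p j - starRingEnd ℂ (p j) * vv j))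
          * (-Complex.I * ∑ i, M i i)
        + (-Complex.I * ∑ i, M i i)
          * (-Complex.I * ∑ j, (starRingEnd ℂ (vv j) * p j - starRingEnd ℂ (p j) * vv j)))
      - ∑ j, ∑ k, ((starRingEnd ℂ (vv j) * p k - starRingEnd ℂ (p j) * vv k) * M k j
        + M j k * (starRingEnd ℂ (vv k) * p j - starRingEnd ℂ (p k) * vv j))) = 0 := by
  set cv : Fin n → ℂ := fun j => starRingEnd ℂ (vv j) with hcv
  set cp : Fin n → ℂ := fun j => starRingEnd ℂ (p j) with hcp
  set T : ℂ := ∑ i, M i i with hT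
  -- star computation
  have hstar : ∀ j, star (-(Complex.I * (-Complex.I * T) * vv j + ∑ m, vv m * M m j))
      = T * cv j + ∑ m, cv m * M j m := by
    intro j
    simp only [hcv, hT, star_neg, star_add, star_mul', star_sum, Complex.star_def, _root_.map_sum,
      _root_.map_mul, _root_.map_neg, Complex.conj_I, hc, Finset.sum_neg_distrib, mul_neg, neg_mul, neg_neg]
    linear_combination (-(∑ i, M i i) * starRingEnd ℂ (vv j)) * Complex.I_sq
  -- reshape part A
  have eA : (∑ j, ((-(Complex.I * (-Complex.I * T) * vv j + ∑ m, vv m * M m j)) * cp j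
        + p j * star (-(Complex.I * (-Complex.I * T) * vv j + ∑ m, vv m * M m j))))
      = ∑ j, (-(T * (vv j * cp j)) + -((∑ m, vv m * M m j) * cp j)
          + T * (p j * cv j) + p j * (∑ m, cv m * M j m)) := by
    refine Finset.sum_congr rfl fun j _ => ?_
    rw [hstar j]
    linear_combination (T * (vv j * cp j)) * Complex.I_sq
  rw [eA]
  -- split sums
  rw [show (∑ j, (-(T * (vv j * cp j)) + -((∑ m, vv m * M m j) * cp j)
      + T * (p j * cv j) + p j * (∑ m, cv m * M j m)))
    = -(T * ∑ j, vv j * cp j) + -(∑ j, (∑ m, vv m * M m j) * cp j)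
      + T * (∑ j, p j * cv j) + ∑ j, p j * (∑ m, cv m * M j m) by
    simp only [Finset.sum_add_distrib, Finset.sum_neg_distrib, ← Finset.mul_sum]]
  -- part B: remove I
  have eB : ((-Complex.I * ∑ j, (cv j * p j - cp j * vv j)) * (-Complex.I * T)
        + (-Complex.I * T) * (-Complex.I * ∑ j, (cv j * p j - cp j * vv j)))
      = -(2 * (T * ((∑ j, cv j * p j) - (∑ j, cp j * vv j)))) := by
    rw [Finset.sum_sub_distrib]
    linear_combination (2 * T * ((∑ j, cv j * p j) - (∑ j, cp j * vv j))) * Complex.I_sq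
  rw [eB]
  -- part C split
  rw [show (∑ j, ∑ k, ((cv j * p k - cp j * vv k) * M k j + M j k * (cv k * p j - cp k * vv j)))
    = (∑ j, ∑ k, cv j * (p k * M k j)) - (∑ j, ∑ k, cp j * (vv k * M k j))
      + ((∑ j, ∑ k, M j k * (cv k * p j)) - (∑ j, ∑ k, M j k * (cp k * vv j))) by
    simp only [← Finset.sum_sub_distrib, ← Finset.sum_add_distrib]
    refine Finset.sum_congr rfl fun j _ => Finset.sum_congr rfl fun k _ => by ring]
  -- identify atoms
  have hS2 : (∑ j, cv j * p j) = ∑ j, p j * cv j :=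
    Finset.sum_congr rfl fun j _ => mul_comm _ _
  have hS1 : (∑ j, cp j * vv j) = ∑ j, vv j * cp j :=
    Finset.sum_congr rfl fun j _ => mul_comm _ _
  have hU1 : (∑ j, (∑ m, vv m * M m j) * cp j) = ∑ j, ∑ k, cp j * (vv k * M k j) := by
    refine Finset.sum_congr rfl fun j _ => ?_
    rw [Finset.sum_mul]
    exact Finset.sum_congr rfl fun k _ => by ring
  have hU2 : (∑ j, p j * (∑ m, cv m * M j m)) = ∑ j, ∑ k, M j k * (cv k * p j) := by
    refine Finset.sum_congr rfl fun j _ => ?_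
    rw [Finset.mul_sum]
    exact Finset.sum_congr rfl fun k _ => by ring
  have hC3 : (∑ j, ∑ k, M j k * (cv k * p j)) = ∑ j, ∑ k, cv j * (p k * M k j) := by
    rw [sum_swap_mul']
    exact Finset.sum_congr rfl fun j _ => Finset.sum_congr rfl fun k _ => by ring
  have hC4 : (∑ j, ∑ k, M j k * (cp k * vv j)) = ∑ j, ∑ k, cp j * (vv k * M k j) := by
    rw [sum_swap_mul']
    exact Finset.sum_congr rfl fun j _ => Finset.sum_congr rfl fun k _ => by ring
  rw [hS2, hS1, hU1, hU2, hC3, hC4]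
  ring

/-- conservation law of the −1 flow in SU(N):
under h⊥′ + i·h·v + v⌟𝐡 = 0 and 𝐡′ = v̄⊗h⊥ − h̄⊥⊗v (with 𝐡 anti-Hermitian and
h = −i·tr 𝐡), the quantity |h⊥|² + (1/2)(h² − tr(𝐡²)) is constant. -/
theorem statement17 (n : ℕ) (hn : 1 ≤ n)
    (v hp : ℝ → Fin n → ℂ) (hm : ℝ → Matrix (Fin n) (Fin n) ℂ)
    (hdv : ∀ j, Differentiable ℝ fun x => v x j)
    (hdh : ∀ j, Differentiable ℝ fun x => hp x j)
    (hdm : ∀ j k, Differentiable ℝ fun x => hm x j k)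
    (hanti : ∀ x, (hm x)ᴴ = -(hm x))
    (h : ℝ → ℂ) (hdef : ∀ x, h x = -Complex.I * (hm x).trace)
    (heq1 : ∀ x j, deriv (fun y => hp y j) x + Complex.I * h x * v x j
        + contr (v x) (hm x) j = 0)
    (heq2 : ∀ x j k, deriv (fun y => hm y j k) x
        = starRingEnd ℂ (v x j) * hp x k - starRingEnd ℂ (hp x j) * v x k) :
    ∀ x y, dotv (hp x) (cvec (hp x)) + (1 / 2) * ((h x) ^ 2 - (hm x * hm x).trace)
        = dotv (hp y) (cvec (hp y)) + (1 / 2) * ((h y) ^ 2 - (hm y * hm y).trace) := by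
  have hc : ∀ x j k, starRingEnd ℂ (hm x k j) = - hm x j k := by
    intro x j k
    have := congrFun (congrFun (hanti x) j) k
    simpa [Matrix.conjTranspose_apply] using this
  have htr : ∀ z, h z = -Complex.I * ∑ i, hm z i i := by
    intro z
    rw [hdef z]
    simp [Matrix.trace, Matrix.diag]
  set g : ℝ → ℂ := fun z => (∑ j, hp z j * starRingEnd ℂ (hp z j))
    + (1/2) * ((-Complex.I * ∑ j, hm z j j) * (-Complex.I * ∑ j, hm z j j)
        - ∑ j, ∑ k, hm z j k * hm z k j) with hg
  have hgoal : ∀ z, dotv (hp z) (cvec (hp z)) + (1 / 2) * ((h z) ^ 2 - (hm z * hm z).trace)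
      = g z := by
    intro z
    rw [htr z]
    simp only [hg, dotv, cvec, Matrix.trace, Matrix.diag, Matrix.mul_apply, pow_two,
      Finset.sum_mul]
  have key : ∀ z, HasDerivAt g 0 z := by
    intro z
    have hhp' : ∀ j, HasDerivAt (fun w => hp w j)
        (-(Complex.I * (-Complex.I * ∑ i, hm z i i) * v z j + ∑ m, v z m * hm z m j)) z := by
      intro j
      have h1 := (hdh j z).hasDerivAt
      have h2 := heq1 z j
      simp only [contr] at h2
      have h3 : deriv (fun w => hp w j) z
          = -(Complex.I * (-Complex.I * ∑ i, hm z i i) * v z j + ∑ m, v z m * hm z m j) := by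
        rw [← htr z]
        linear_combination h2
      rwa [h3] at h1
    have hhm' : ∀ j k, HasDerivAt (fun w => hm w j k)
        (starRingEnd ℂ (v z j) * hp z k - starRingEnd ℂ (hp z j) * v z k) z := by
      intro j k
      have h1 := (hdm j k z).hasDerivAt
      rwa [heq2 z j k] at h1
    have H1 : HasDerivAt (fun w => ∑ j, hp w j * starRingEnd ℂ (hp w j))
        (∑ j, ((-(Complex.I * (-Complex.I * ∑ i, hm z i i) * v z j + ∑ m, v z m * hm z m j))
            * starRingEnd ℂ (hp z j)
          + hp z j * star (-(Complex.I * (-Complex.I * ∑ i, hm z i i) * v z j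
            + ∑ m, v z m * hm z m j)))) z := by
      refine HasDerivAt.fun_sum fun j _ => ?_
      exact (hhp' j).mul (hhp' j).star
    have HT : HasDerivAt (fun w => -Complex.I * ∑ j, hm w j j)
        (-Complex.I * ∑ j, (starRingEnd ℂ (v z j) * hp z j - starRingEnd ℂ (hp z j) * v z j))
        z := (HasDerivAt.fun_sum fun j _ => hhm' j j).const_mul _
    have H2 : HasDerivAt
        (fun w => (-Complex.I * ∑ j, hm w j j) * (-Complex.I * ∑ j, hm w j j))
        ((-Complex.I * ∑ j, (starRingEnd ℂ (v z j) * hp z j - starRingEnd ℂ (hp z j) * v z j))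
            * (-Complex.I * ∑ j, hm z j j)
          + (-Complex.I * ∑ j, hm z j j)
            * (-Complex.I * ∑ j, (starRingEnd ℂ (v z j) * hp z j
              - starRingEnd ℂ (hp z j) * v z j))) z := HT.mul HT
    have H3 : HasDerivAt (fun w => ∑ j, ∑ k, hm w j k * hm w k j)
        (∑ j, ∑ k, ((starRingEnd ℂ (v z j) * hp z k - starRingEnd ℂ (hp z j) * v z k) * hm z k j
          + hm z j k * (starRingEnd ℂ (v z k) * hp z j - starRingEnd ℂ (hp z k) * v z j))) z :=
      HasDerivAt.fun_sum fun j _ => HasDerivAt.fun_sum fun k _ => (hhm' j k).mul (hhm' k j)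
    have H : HasDerivAt g
        ((∑ j, ((-(Complex.I * (-Complex.I * ∑ i, hm z i i) * v z j + ∑ m, v z m * hm z m j))
            * starRingEnd ℂ (hp z j)
          + hp z j * star (-(Complex.I * (-Complex.I * ∑ i, hm z i i) * v z j
            + ∑ m, v z m * hm z m j))))
        + (1/2) * (((-Complex.I * ∑ j, (starRingEnd ℂ (v z j) * hp z j
              - starRingEnd ℂ (hp z j) * v z j)) * (-Complex.I * ∑ j, hm z j j)
            + (-Complex.I * ∑ j, hm z j j) * (-Complex.I * ∑ j, (starRingEnd ℂ (v z j) * hp z j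
              - starRingEnd ℂ (hp z j) * v z j)))
          - ∑ j, ∑ k, ((starRingEnd ℂ (v z j) * hp z k - starRingEnd ℂ (hp z j) * v z k) * hm z k j
            + hm z j k * (starRingEnd ℂ (v z k) * hp z j - starRingEnd ℂ (hp z k) * v z j)))) z :=
      H1.add ((H2.sub H3).const_mul _)
    have hz := aux_zero (v z) (hp z) (hm z) (hc z)
    rwa [hz] at H
  have hdiff : Differentiable ℝ g := fun z => (key z).differentiableAt
  have hderiv : ∀ z, deriv g z = 0 := fun z => (key z).deriv
  intro x y
  rw [hgoal x, hgoal y]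
  exact is_const_of_deriv_eq_zero hdiff hderiv x y
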